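/- Let Q(s) = ∫_s^∞ y|W(y)|/(1+|ω|y) · e^{(|Im ω|+Im ω)y} dy with Im ω ≤ 0 and W ∈ L¹(0,∞), and suppose |B(s,y)| ≤ C e^{|Im ω|y + (Im ω)s}(y/(1+|ω|y))^{λ+1/2}(s/(1+|ω|s))^{−λ+1/2} for 0 < s < y, and |η_0(s)| ≤ C(|ω|s/(1+|ω|s))^{−λ+1/2}e^{(Im ω)s}. Define η_{n+1}(s) = ∫_s^∞ B(s,y)W(y)η_n(y)dy. Then |η_n(s)| ≤ C (C Q(s))^n/n! · (|ω|s/(1+|ω|s))^{−λ+1/2} e^{(Im ω)s} for all n, and the series Σ η_n converges with |Ση_n(s) − η_0(s)| ≤ C e^{(Im ω)s}(|ω|s/(1+|ω|s))^{−λ+1/2}(e^{CQ(s)} − 1). -/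

import Mathlib

open Real Set Filter MeasureTheory

lemma jost_key (f : ℝ → ℝ) (a : ℝ) (hm : Measurable f)
    (hf : IntegrableOn f (Ioi a)) (hf0 : ∀ y, a < y → 0 ≤ f y) :
    ∀ n : ℕ, ∀ s, a ≤ s →
      (IntegrableOn (fun y => f y * (∫ t in Ioi y, f t) ^ n) (Ioi s)) ∧
      ∫ y in Ioi s, f y * (∫ t in Ioi y, f t) ^ n
        = (∫ y in Ioi s, f y) ^ (n + 1) / (n + 1) := by
  set Qf : ℝ → ℝ := fun y => ∫ t in Ioi (max y a), f t with hQf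
  have hfs : ∀ s, a ≤ s → IntegrableOn f (Ioi s) :=
    fun s hs => hf.mono_set (Ioi_subset_Ioi hs)
  have hQeq : ∀ y, a ≤ y → Qf y = ∫ t in Ioi y, f t := by
    intro y hy; simp [hQf, max_eq_left hy]
  have hQanti : Antitone Qf := by
    intro u v huv
    apply setIntegral_mono_set (hfs _ (le_max_right u a))
    · exact (ae_restrict_iff' measurableSet_Ioi).2 (ae_of_all _ fun y hy =>
        hf0 y (lt_of_le_of_lt (le_max_right u a) hy))
    · exact HasSubset.Subset.eventuallyLE (Ioi_subset_Ioi (max_le_max huv le_rfl))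
  have hQmeas : Measurable Qf := hQanti.measurable
  have hQnonneg : ∀ y, 0 ≤ Qf y := fun y =>
    setIntegral_nonneg measurableSet_Ioi fun t ht =>
      hf0 t (lt_of_le_of_lt (le_max_right y a) ht)
  have hgint : ∀ n : ℕ, ∀ s, a ≤ s → IntegrableOn (fun y => f y * Qf y ^ n) (Ioi s) := by
    intro n s hs
    apply Integrable.mono' ((hfs s hs).mul_const (Qf s ^ n))
      ((hm.mul (hQmeas.pow_const n)).aestronglyMeasurable)
    refine (ae_restrict_iff' measurableSet_Ioi).2 (ae_of_all _ fun y hy => ?_)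
    have hy' : a < y := lt_of_le_of_lt hs hy
    have h1 : 0 ≤ f y * Qf y ^ n := mul_nonneg (hf0 y hy') (pow_nonneg (hQnonneg y) n)
    rw [Real.norm_eq_abs, Pi.mul_apply, abs_of_nonneg h1]
    exact mul_le_mul_of_nonneg_left
      (pow_le_pow_left₀ (hQnonneg y) (hQanti (le_of_lt hy)) n) (hf0 y hy')
  -- main claim with Qf
  have main : ∀ n : ℕ, ∀ s, a ≤ s →
      ∫ y in Ioi s, f y * Qf y ^ n = Qf s ^ (n + 1) / (n + 1) := by
    intro n
    induction n with
    | zero => intro s hs; simp [hQeq s hs]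
    | succ n IH =>
      intro s hs
      set g : ℝ → ℝ := fun y => f y * Qf y ^ n with hg
      set ν := volume.restrict (Ioi s) with hν
      have hstep1 : ∫ y in Ioi s, f y * Qf y ^ (n + 1)
          = ∫ y in Ioi s, ∫ t in Ioi s, ((Ioi y).indicator f t * g y) := by
        apply setIntegral_congr_fun measurableSet_Ioi
        intro y hy
        have h1 : ∫ t in Ioi s, (Ioi y).indicator f t = Qf y := by
          rw [setIntegral_indicator measurableSet_Ioi, Ioi_inter_Ioi,
            max_eq_right (le_of_lt hy), hQeq y (le_trans hs (le_of_lt hy))]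
        calc f y * Qf y ^ (n + 1) = Qf y * g y := by rw [hg]; ring
          _ = ∫ t in Ioi s, ((Ioi y).indicator f t * g y) := by
              rw [integral_mul_const, h1]
      have hHint : Integrable (Function.uncurry fun y t => (Ioi y).indicator f t * g y)
          (ν.prod ν) := by
        have hmeas : Measurable (Function.uncurry fun y t => (Ioi y).indicator f t * g y) := by
          have h1 : (Function.uncurry fun y t => (Ioi y).indicator f t * g y)
              = fun p : ℝ × ℝ => (if p.1 < p.2 then f p.2 else 0) * g p.1 := by
            ext p; simp [Function.uncurry, Set.indicator_apply]
          rw [h1]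
          exact ((Measurable.ite (measurableSet_lt measurable_fst measurable_snd)
            (hm.comp measurable_snd) measurable_const).mul
            ((hm.mul (hQmeas.pow_const n)).comp measurable_fst))
        apply Integrable.mono' (Integrable.mul_prod ((hfs s hs).mul_const (Qf s ^ n)) (hfs s hs))
          hmeas.aestronglyMeasurable
        rw [Measure.prod_restrict]
        refine (ae_restrict_iff' (measurableSet_Ioi.prod measurableSet_Ioi)).2
          (ae_of_all _ fun p hp => ?_)
        obtain ⟨hp1, hp2⟩ := hp
        have h1 : a < p.1 := lt_of_le_of_lt hs hp1
        have h2 : a < p.2 := lt_of_le_of_lt hs hp2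
        have hb : 0 ≤ f p.1 * Qf s ^ n * f p.2 :=
          mul_nonneg (mul_nonneg (hf0 _ h1) (pow_nonneg (hQnonneg s) n)) (hf0 _ h2)
        rw [Function.uncurry, Real.norm_eq_abs]
        by_cases hlt : p.1 < p.2
        · rw [Set.indicator_of_mem (mem_Ioi.2 hlt)]
          have hgn : 0 ≤ f p.2 * g p.1 :=
            mul_nonneg (hf0 _ h2) (mul_nonneg (hf0 _ h1) (pow_nonneg (hQnonneg _) n))
          rw [abs_of_nonneg hgn]
          calc f p.2 * g p.1 ≤ f p.2 * (f p.1 * Qf s ^ n) := by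
                apply mul_le_mul_of_nonneg_left _ (hf0 _ h2)
                exact mul_le_mul_of_nonneg_left
                  (pow_le_pow_left₀ (hQnonneg _) (hQanti (le_of_lt hp1)) n) (hf0 _ h1)
            _ = f p.1 * Qf s ^ n * f p.2 := by ring
        · rw [Set.indicator_of_notMem (by simpa using hlt), zero_mul, abs_zero]
          exact hb
      have hswap : ∫ y in Ioi s, ∫ t in Ioi s, ((Ioi y).indicator f t * g y)
          = ∫ t in Ioi s, ∫ y in Ioi s, ((Ioi y).indicator f t * g y) :=
        integral_integral_swap hHint
      -- inner integral computation
      have hinner : ∀ t ∈ Ioi s, (∫ y in Ioi s, ((Ioi y).indicator f t * g y))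
          = f t * (Qf s ^ (n + 1) / (n + 1) - Qf t ^ (n + 1) / (n + 1)) := by
        intro t ht
        have ht' : a ≤ t := le_trans hs (le_of_lt ht)
        have h1 : ∫ y in Ioi s, ((Ioi y).indicator f t * g y)
            = ∫ y in Ioi s, (Iio t).indicator (fun y => f t * g y) y := by
          apply setIntegral_congr_fun measurableSet_Ioi
          intro y _
          by_cases hlt : y < t
          · simp [Set.indicator_apply, hlt]
          · simp [Set.indicator_apply, hlt, not_lt.1 hlt]
        have h2 : ∫ y in Ioi s, (Iio t).indicator (fun y => f t * g y) y
            = f t * ∫ y in Ioo s t, g y := by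
          rw [setIntegral_indicator measurableSet_Iio, Ioi_inter_Iio, integral_const_mul]
        have hsplit : ∫ y in Ioi s, g y = (∫ y in Ioo s t, g y) + ∫ y in Ici t, g y := by
          have hu : Ioo s t ∪ Ici t = Ioi s := Ioo_union_Ici_eq_Ioi ht
          have := setIntegral_union (f := g) (μ := volume) (s := Ioo s t) (t := Ici t)
              (Set.disjoint_left.2 fun x hx hx2 => absurd hx2 (not_le.2 hx.2))
              measurableSet_Ici ((hgint n s hs).mono_set Ioo_subset_Ioi_self)
              ((integrableOn_Ici_iff_integrableOn_Ioi (by simp)).2 (hgint n t ht'))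
          rwa [hu] at this
        have hIci : ∫ y in Ici t, g y = Qf t ^ (n + 1) / (n + 1) := by
          rw [integral_Ici_eq_integral_Ioi]; exact IH t ht'
        have hIoo : ∫ y in Ioo s t, g y = Qf s ^ (n + 1) / (n + 1) - Qf t ^ (n + 1) / (n + 1) := by
          rw [← IH s hs]; rw [← hIci]; linarith [hsplit]
        rw [h1, h2, hIoo]
      have houter : ∫ t in Ioi s, ∫ y in Ioi s, ((Ioi y).indicator f t * g y)
          = ∫ t in Ioi s, f t * (Qf s ^ (n + 1) / (n + 1) - Qf t ^ (n + 1) / (n + 1)) :=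
        setIntegral_congr_fun measurableSet_Ioi hinner
      have hsub : ∫ t in Ioi s, f t * (Qf s ^ (n + 1) / (n + 1) - Qf t ^ (n + 1) / (n + 1))
          = (Qf s ^ (n + 1) / (n + 1)) * Qf s
            - (1 / (n + 1)) * ∫ t in Ioi s, f t * Qf t ^ (n + 1) := by
        have heq : (fun t => f t * (Qf s ^ (n + 1) / (n + 1) - Qf t ^ (n + 1) / (n + 1)))
            = fun t => (Qf s ^ (n + 1) / (n + 1)) * f t
              - (1 / (n + 1)) * (f t * Qf t ^ (n + 1)) := by
          ext t; ring
        rw [heq, integral_sub (((hfs s hs).const_mul _)) ((hgint (n+1) s hs).const_mul _),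
          integral_const_mul, integral_const_mul, hQeq s hs]
      have hfinal : ∫ y in Ioi s, f y * Qf y ^ (n + 1)
          = (Qf s ^ (n + 1) / (n + 1)) * Qf s
            - (1 / (n + 1)) * ∫ y in Ioi s, f y * Qf y ^ (n + 1) :=
        hstep1.trans (hswap.trans (houter.trans hsub))
      set J := ∫ y in Ioi s, f y * Qf y ^ (n + 1) with hJ
      have hn1 : (0:ℝ) < (n:ℝ) + 1 := by positivity
      have hfinal' : J * ((n:ℝ) + 1) = Qf s ^ (n + 1) * Qf s - J := by
        field_simp at hfinal
        linarith
      rw [eq_div_iff (by push_cast; positivity)]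
      push_cast
      linear_combination hfinal'
  intro n s hs
  have hcong : EqOn (fun y => f y * Qf y ^ n) (fun y => f y * (∫ t in Ioi y, f t) ^ n) (Ioi s) :=
    fun y hy => by simp only [hQeq y (le_trans hs (le_of_lt hy))]
  constructor
  · exact ((hgint n s hs).congr_fun hcong measurableSet_Ioi)
  · rw [← setIntegral_congr_fun measurableSet_Ioi hcong, main n s hs, hQeq s hs]

set_option maxHeartbeats 2000000 in
theorem stmt_13 (lam C : ℝ) (hlam : 0 < lam) (hC : 0 < C) (ω : ℂ)
    (hω_im : ω.im ≤ 0) (hω_ne : ω ≠ 0)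
    (W : ℝ → ℝ) (hW : IntegrableOn W (Ioi 0))
    (B : ℝ → ℝ → ℂ) (η : ℕ → ℝ → ℂ) (Q : ℝ → ℝ)
    (hQ : ∀ s, Q s = ∫ y in Ioi s,
      y * |W y| / (1 + ‖ω‖ * y) * Real.exp ((|ω.im| + ω.im) * y))
    (hB : ∀ s y : ℝ, 0 < s → s < y →
      ‖B s y‖ ≤ C * Real.exp (|ω.im| * y + ω.im * s) *
        (y / (1 + ‖ω‖ * y)) ^ (lam + 1/2) *
        (s / (1 + ‖ω‖ * s)) ^ (-lam + 1/2))
    (hη0 : ∀ s > 0, ‖η 0 s‖ ≤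
      C * (‖ω‖ * s / (1 + ‖ω‖ * s)) ^ (-lam + 1/2) *
        Real.exp (ω.im * s))
    (hrec : ∀ n : ℕ, ∀ s > 0, η (n + 1) s = ∫ y in Ioi s, B s y * W y * η n y) :
    (IntegrableOn (fun y =>
        y * |W y| / (1 + ‖ω‖ * y) * Real.exp ((|ω.im| + ω.im) * y))
      (Ioi 0)) ∧
    (∀ n : ℕ, ∀ s > 0, ‖η n s‖ ≤ C * (C * Q s) ^ n / n.factorial *
        (‖ω‖ * s / (1 + ‖ω‖ * s)) ^ (-lam + 1/2) *
        Real.exp (ω.im * s)) ∧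
    ∃ ηsum : ℝ → ℂ,
      (∀ s > 0, HasSum (fun n => η n s) (ηsum s)) ∧
      (∀ s > 0, ‖ηsum s - η 0 s‖ ≤ C * Real.exp (ω.im * s) *
        (‖ω‖ * s / (1 + ‖ω‖ * s)) ^ (-lam + 1/2) *
        (Real.exp (C * Q s) - 1)) := by
  have him : |ω.im| = -ω.im := abs_of_nonpos hω_im
  have hexp0 : |ω.im| + ω.im = 0 := by rw [him]; ring
  set c := ‖ω‖ with hc
  have hcpos : 0 < c := norm_pos_iff.mpr hω_ne
  have hWm : AEStronglyMeasurable W (volume.restrict (Ioi 0)) := hW.1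
  set W' := hWm.mk W with hW'
  have hWmeas : Measurable W' := hWm.stronglyMeasurable_mk.measurable
  have hWW' : W =ᵐ[volume.restrict (Ioi 0)] W' := hWm.ae_eq_mk
  set f : ℝ → ℝ := fun y => y * |W' y| / (1 + c * y) with hf
  have hfmeas : Measurable f := by
    apply Measurable.div
    · exact measurable_id.mul hWmeas.abs
    · exact measurable_const.add (measurable_const.mul measurable_id)
  have hFf : (fun y => y * |W y| / (1 + c * y)) =ᵐ[volume.restrict (Ioi 0)] f := by
    filter_upwards [hWW'] with y hy
    rw [hf]; simp only [hy]
  have hf0 : ∀ y : ℝ, 0 < y → 0 ≤ f y := fun y hy =>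
    div_nonneg (mul_nonneg hy.le (abs_nonneg _)) (by positivity)
  have hW'int : IntegrableOn W' (Ioi 0) := hW.congr hWW'
  have hfint : IntegrableOn f (Ioi 0) := by
    apply Integrable.mono' (hW'int.abs.const_mul c⁻¹) hfmeas.aestronglyMeasurable
    refine (ae_restrict_iff' measurableSet_Ioi).2 (ae_of_all _ fun y hy => ?_)
    have hy0 : 0 < y := hy
    have h1cy : (0:ℝ) < 1 + c * y := by positivity
    rw [Real.norm_eq_abs, abs_of_nonneg (hf0 y hy0)]
    rw [hf, div_le_iff₀ h1cy]
    have h1 : c⁻¹ * |W' y| * (1 + c * y) = |W' y| * c⁻¹ + |W' y| * y := by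
      field_simp
    rw [h1]
    nlinarith [abs_nonneg (W' y), mul_pos hcpos hy0, inv_pos.2 hcpos, abs_nonneg (W' y),
      mul_nonneg (abs_nonneg (W' y)) (inv_pos.2 hcpos).le]
  have goal1 : IntegrableOn (fun y =>
      y * |W y| / (1 + c * y) * Real.exp ((|ω.im| + ω.im) * y)) (Ioi 0) := by
    simp only [hexp0, zero_mul, Real.exp_zero, mul_one]
    exact hfint.congr hFf.symm
  have hQs : ∀ s : ℝ, 0 ≤ s → Q s = ∫ t in Ioi s, f t := by
    intro s hs
    rw [hQ s]
    simp only [hexp0, zero_mul, Real.exp_zero, mul_one]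
    exact integral_congr_ae (ae_restrict_of_ae_restrict_of_subset (Ioi_subset_Ioi hs) hFf)
  have key := jost_key f 0 hfmeas hfint (fun y hy => hf0 y hy)
  have hQnn : ∀ s : ℝ, 0 ≤ s → 0 ≤ Q s := by
    intro s hs
    rw [hQs s hs]
    exact setIntegral_nonneg measurableSet_Ioi fun t ht => hf0 t (lt_of_le_of_lt hs ht)
  -- main bound
  have hbound : ∀ n : ℕ, ∀ s, 0 < s → ‖η n s‖ ≤ C * (C * Q s) ^ n / n.factorial *
      (c * s / (1 + c * s)) ^ (-lam + 1/2) * Real.exp (ω.im * s) := by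
    intro n
    induction n with
    | zero => intro s hs; simpa using hη0 s hs
    | succ n IH =>
      intro s hs
      have hs0 : (0:ℝ) ≤ s := hs.le
      have h1cs : (0:ℝ) < 1 + c * s := by positivity
      have hσ : (0:ℝ) < s / (1 + c * s) := by positivity
      rw [hrec n s hs]
      set K := C ^ (n + 2) / n.factorial * (c * s / (1 + c * s)) ^ (-lam + 1/2) *
        Real.exp (ω.im * s) with hK
      have hgi := (key n s hs0).1
      have hle : ‖∫ y in Ioi s, B s y * (W y : ℂ) * η n y‖ ≤
          ∫ y in Ioi s, K * (f y * (∫ t in Ioi y, f t) ^ n) := by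
        apply norm_integral_le_of_norm_le (hgi.const_mul K)
        have haeW : ∀ᵐ y ∂(volume.restrict (Ioi s)), W y = W' y :=
          ae_restrict_of_ae_restrict_of_subset (Ioi_subset_Ioi hs0) hWW'
        filter_upwards [haeW, ae_restrict_mem measurableSet_Ioi] with y hWy hy
        have hys : s < y := hy
        have hy0 : 0 < y := lt_trans hs hys
        have h1cy : (0:ℝ) < 1 + c * y := by positivity
        have hp : (0:ℝ) < y / (1 + c * y) := by positivity
        rw [← hQs y hy0.le]
        have hnorm : ‖B s y * (W y : ℂ) * η n y‖ = ‖B s y‖ * |W' y| * ‖η n y‖ := by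
          rw [norm_mul, norm_mul, Complex.norm_real, Real.norm_eq_abs, hWy]
        rw [hnorm]
        have hB' := hB s y hs hys
        have hη' := IH y hy0
        calc ‖B s y‖ * |W' y| * ‖η n y‖
            ≤ (C * Real.exp (|ω.im| * y + ω.im * s) * (y / (1 + c * y)) ^ (lam + 1/2) *
                (s / (1 + c * s)) ^ (-lam + 1/2)) * |W' y| *
              (C * (C * Q y) ^ n / n.factorial * (c * y / (1 + c * y)) ^ (-lam + 1/2) *
                Real.exp (ω.im * y)) := by
              have hBnn : (0:ℝ) ≤ C * Real.exp (|ω.im| * y + ω.im * s) *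
                  (y / (1 + c * y)) ^ (lam + 1/2) * (s / (1 + c * s)) ^ (-lam + 1/2) := by
                positivity
              exact mul_le_mul (mul_le_mul hB' le_rfl (abs_nonneg _)
                hBnn) hη' (norm_nonneg _) (mul_nonneg hBnn (abs_nonneg _))
          _ = K * (f y * Q y ^ n) := by
              have e1 : Real.exp (|ω.im| * y + ω.im * s) * Real.exp (ω.im * y)
                  = Real.exp (ω.im * s) := by
                rw [← Real.exp_add]
                congr 1
                rw [him]; ring
              have e2 : (y / (1 + c * y)) ^ (lam + 1/2) *
                  (y / (1 + c * y)) ^ (-lam + 1/2) = y / (1 + c * y) := by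
                rw [← Real.rpow_add hp,
                  show lam + 1/2 + (-lam + 1/2) = (1:ℝ) by ring, Real.rpow_one]
              have e3 : c ^ (-lam + 1/2) * (s / (1 + c * s)) ^ (-lam + 1/2)
                  = (c * s / (1 + c * s)) ^ (-lam + 1/2) := by
                rw [mul_div_assoc, Real.mul_rpow hcpos.le hσ.le]
              have e4 : (c * y / (1 + c * y)) ^ (-lam + 1/2)
                  = c ^ (-lam + 1/2) * (y / (1 + c * y)) ^ (-lam + 1/2) := by
                rw [mul_div_assoc, Real.mul_rpow hcpos.le hp.le]
              rw [e4, hK, hf]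
              rw [mul_pow C (Q y) n]
              calc (C * Real.exp (|ω.im| * y + ω.im * s) * (y / (1 + c * y)) ^ (lam + 1/2) *
                  (s / (1 + c * s)) ^ (-lam + 1/2)) * |W' y| *
                  (C * (C ^ n * Q y ^ n) / n.factorial *
                    (c ^ (-lam + 1/2) * (y / (1 + c * y)) ^ (-lam + 1/2)) *
                    Real.exp (ω.im * y))
                  = (C * C * C ^ n) * (Q y ^ n / n.factorial) *
                    (Real.exp (|ω.im| * y + ω.im * s) * Real.exp (ω.im * y)) *
                    ((y / (1 + c * y)) ^ (lam + 1/2) * (y / (1 + c * y)) ^ (-lam + 1/2)) *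
                    (c ^ (-lam + 1/2) * (s / (1 + c * s)) ^ (-lam + 1/2)) * |W' y| := by
                    ring
                _ = (C * C * C ^ n) * (Q y ^ n / n.factorial) * Real.exp (ω.im * s) *
                    (y / (1 + c * y)) * ((c * s / (1 + c * s)) ^ (-lam + 1/2)) * |W' y| := by
                    rw [e1, e2, e3]
                _ = C ^ (n + 2) / ↑n.factorial * (c * s / (1 + c * s)) ^ (-lam + 1/2) *
                    Real.exp (ω.im * s) * (y * |W' y| / (1 + c * y) * Q y ^ n) := by
                    ring
      calc ‖∫ y in Ioi s, B s y * (W y : ℂ) * η n y‖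
          ≤ ∫ y in Ioi s, K * (f y * (∫ t in Ioi y, f t) ^ n) := hle
        _ = K * ((∫ t in Ioi s, f t) ^ (n + 1) / (n + 1)) := by
            rw [integral_const_mul, (key n s hs0).2]
        _ = C * (C * Q s) ^ (n + 1) / ↑(n + 1).factorial *
            (c * s / (1 + c * s)) ^ (-lam + 1/2) * Real.exp (ω.im * s) := by
            rw [← hQs s hs0, hK, Nat.factorial_succ, mul_pow C (Q s) (n+1)]
            have hfac : (0:ℝ) < n.factorial := by exact_mod_cast n.factorial_pos
            push_cast
            field_simp
            ring
  have hub : ∀ s, 0 < s → ∀ n : ℕ,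
      ‖η n s‖ ≤ (C * (c * s / (1 + c * s)) ^ (-lam + 1/2) * Real.exp (ω.im * s)) *
        ((C * Q s) ^ n / n.factorial) := by
    intro s hs n
    calc ‖η n s‖ ≤ C * (C * Q s) ^ n / n.factorial *
        (c * s / (1 + c * s)) ^ (-lam + 1/2) * Real.exp (ω.im * s) := hbound n s hs
      _ = (C * (c * s / (1 + c * s)) ^ (-lam + 1/2) * Real.exp (ω.im * s)) *
        ((C * Q s) ^ n / n.factorial) := by ring
  have hsumu : ∀ s : ℝ, Summable (fun n : ℕ =>
      (C * (c * s / (1 + c * s)) ^ (-lam + 1/2) * Real.exp (ω.im * s)) *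
        ((C * Q s) ^ n / n.factorial)) := fun s =>
    (Real.summable_pow_div_factorial (C * Q s)).mul_left _
  have hsum : ∀ s, 0 < s → Summable (fun n => η n s) := fun s hs =>
    Summable.of_norm_bounded (hsumu s) (hub s hs)
  refine ⟨goal1, hbound, fun s => ∑' n, η n s, fun s hs => (hsum s hs).hasSum,
    fun s hs => ?_⟩
  set x := C * Q s with hx
  set A := C * (c * s / (1 + c * s)) ^ (-lam + 1/2) * Real.exp (ω.im * s) with hA
  have h0 : (∑' n, η n s) - η 0 s = ∑' n, η (n + 1) s := by
    rw [Summable.tsum_eq_zero_add (hsum s hs), add_sub_cancel_left]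
  rw [h0]
  have hsumu1 : Summable (fun n : ℕ => A * (x ^ (n + 1) / (n + 1).factorial)) :=
    (summable_nat_add_iff 1).2 (hsumu s)
  have hsumnorm : Summable (fun n : ℕ => ‖η (n + 1) s‖) :=
    Summable.of_nonneg_of_le (fun n => norm_nonneg _) (fun n => hub s hs (n + 1)) hsumu1
  calc ‖∑' n, η (n + 1) s‖ ≤ ∑' n, ‖η (n + 1) s‖ := norm_tsum_le_tsum_norm hsumnorm
    _ ≤ ∑' n : ℕ, A * (x ^ (n + 1) / (n + 1).factorial) :=
        Summable.tsum_le_tsum (fun n => hub s hs (n + 1)) hsumnorm hsumu1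
    _ = A * ∑' n : ℕ, x ^ (n + 1) / (n + 1).factorial := tsum_mul_left
    _ = A * (Real.exp x - 1) := by
        have hexpsum : Real.exp x = ∑' n : ℕ, x ^ n / n.factorial := by
          rw [Real.exp_eq_exp_ℝ, NormedSpace.exp_eq_tsum_div]
        have h2 := Summable.tsum_eq_zero_add (f := fun n : ℕ => x ^ n / (n.factorial : ℝ))
          (Real.summable_pow_div_factorial x)
        simp only [pow_zero, Nat.factorial_zero, Nat.cast_one, div_one] at h2
        rw [hexpsum, h2]
        ring
    _ = C * Real.exp (ω.im * s) * (c * s / (1 + c * s)) ^ (-lam + 1/2) *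
        (Real.exp (C * Q s) - 1) := by rw [hA, hx]; ring
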